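/- Let K be a field of characteristic zero, let G be an abelian group, let g be a finite-dimensional Lie algebra over K, and let (B, η) be a universal coacting bialgebra of g. For a bialgebra homomorphism Φ : B → K[G], set g_σ^Φ = { x ∈ g | (Φ ⊗ id_g)(η(x)) = σ ⊗ x } for each σ ∈ G. Then (g_σ^Φ)_{σ ∈ G} is a G-grading of the Lie algebra g, and the assignment Φ ↦ (g_σ^Φ)_{σ ∈ G} is a bijection from the set of bialgebra homomorphisms B → K[G] onto the set of G-gradings of g. -/

import Mathlib

/-!
Statement 9: Let `G` be an abelian group, `g` a finite-dimensional Lie algebra over a field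
`K` of characteristic zero, and `(B, η)` a universal coacting bialgebra of `g`. For a
bialgebra homomorphism `Φ : B → K[G]` set `g_σ^Φ = { x | (Φ ⊗ id)(η x) = σ ⊗ x }`. Then
`(g_σ^Φ)_σ` is a `G`-grading of the Lie algebra `g`, and `Φ ↦ (g_σ^Φ)_σ` is a bijection from
the bialgebra homomorphisms `B → K[G]` onto the `G`-gradings of `g`.
-/

open TensorProduct

universe u

/-- The base-change Lie bracket on `A ⊗[K] g` is `K`-bilinear, so `A ⊗[K] g` is a Lie algebra
over `K` (and not merely over `A`). -/
noncomputable instance baseChangeLieAlgebra {K : Type u} [Field K]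
    {A : Type u} [CommRing A] [Algebra K A]
    {L : Type u} [LieRing L] [LieAlgebra K L] : LieAlgebra K (A ⊗[K] L) :=
  { (inferInstance : Module K (A ⊗[K] L)) with
    lie_smul := fun t x y => by
      rw [← algebraMap_smul A t y, lie_smul, algebraMap_smul] }

/-- `(A, η)` is a universal pair for `(g, h)`. -/
def IsUniversalLiePair (K : Type u) [Field K]
    (g : Type u) [LieRing g] [LieAlgebra K g]
    (h : Type u) [LieRing h] [LieAlgebra K h]
    (A : Type u) [CommRing A] [Algebra K A]
    (η : h →ₗ⁅K⁆ A ⊗[K] g) : Prop :=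
  ∀ (C : Type u) [CommRing C] [Algebra K C], ∀ f : h →ₗ⁅K⁆ C ⊗[K] g,
    ∃! Φ : A →ₐ[K] C, ∀ x : h, f x = LinearMap.rTensor g Φ.toLinearMap (η x)

/-- A coaction of a commutative `K`-bialgebra `B` on the Lie algebra `g`. -/
def IsLieCoaction (K : Type u) [Field K]
    (g : Type u) [LieRing g] [LieAlgebra K g]
    (B : Type u) [CommRing B] [Bialgebra K B]
    (η : g →ₗ⁅K⁆ B ⊗[K] g) : Prop :=
  (∀ x : g, TensorProduct.lid K g
      (LinearMap.rTensor g (Coalgebra.counit (R := K) (A := B)) (η x)) = x) ∧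
  ∀ x : g, LinearMap.rTensor g (Coalgebra.comul (R := K) (A := B)) (η x) =
    (TensorProduct.assoc K B B g).symm (LinearMap.lTensor B η.toLinearMap (η x))

/-- The diagonal group-like map `σ ↦ σ ⊗ σ` on the group algebra. -/
noncomputable def diagMonoidHom (K : Type u) [Field K] (G : Type u) [CommGroup G] :
    G →* MonoidAlgebra K G ⊗[K] MonoidAlgebra K G where
  toFun σ := MonoidAlgebra.of K G σ ⊗ₜ[K] MonoidAlgebra.of K G σ
  map_one' := by
    show MonoidAlgebra.of K G 1 ⊗ₜ[K] MonoidAlgebra.of K G 1 = 1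
    rw [map_one, Algebra.TensorProduct.one_def]
  map_mul' σ τ := by
    show MonoidAlgebra.of K G (σ * τ) ⊗ₜ[K] MonoidAlgebra.of K G (σ * τ)
      = (MonoidAlgebra.of K G σ ⊗ₜ[K] MonoidAlgebra.of K G σ) *
        (MonoidAlgebra.of K G τ ⊗ₜ[K] MonoidAlgebra.of K G τ)
    rw [map_mul, Algebra.TensorProduct.tmul_mul_tmul]

/-- The standard comultiplication of the group algebra `K[G]`, determined by
`Δ(σ) = σ ⊗ σ` for `σ ∈ G`. -/
noncomputable def groupComul (K : Type u) [Field K] (G : Type u) [CommGroup G] :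
    MonoidAlgebra K G →ₗ[K] MonoidAlgebra K G ⊗[K] MonoidAlgebra K G :=
  (MonoidAlgebra.lift K (MonoidAlgebra K G ⊗[K] MonoidAlgebra K G) G (diagMonoidHom K G)).toLinearMap

/-- The standard counit of the group algebra `K[G]`, determined by `ε(σ) = 1` for `σ ∈ G`. -/
noncomputable def groupCounit (K : Type u) [Field K] (G : Type u) [CommGroup G] :
    MonoidAlgebra K G →ₗ[K] K :=
  (MonoidAlgebra.lift K K G (1 : G →* K)).toLinearMap

/-- A bialgebra homomorphism from a commutative `K`-bialgebra `B` to the group algebra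
`K[G]` (with its standard Hopf algebra structure in which every `σ ∈ G` is group-like):
a `K`-algebra homomorphism commuting with the counits and comultiplications. -/
structure BialgHomToGroupAlgebra (K : Type u) [Field K] (G : Type u) [CommGroup G]
    (B : Type u) [CommRing B] [Bialgebra K B] : Type u where
  toAlgHom : B →ₐ[K] MonoidAlgebra K G
  counit_comp : ∀ b : B, groupCounit K G (toAlgHom b) = Coalgebra.counit (R := K) (A := B) b
  comul_comp : ∀ b : B, groupComul K G (toAlgHom b) =
    TensorProduct.map toAlgHom.toLinearMap toAlgHom.toLinearMap
      (Coalgebra.comul (R := K) (A := B) b)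

/-- The `σ`-homogeneous component `{ x | (Φ ⊗ id)(η x) = σ ⊗ x }` of the grading of `g`
associated to `Φ : B → K[G]`. -/
noncomputable def lieGrade {K : Type u} [Field K] {G : Type u} [CommGroup G]
    {g : Type u} [LieRing g] [LieAlgebra K g]
    {B : Type u} [CommRing B] [Bialgebra K B]
    (η : g →ₗ⁅K⁆ B ⊗[K] g) (Φ : B →ₐ[K] MonoidAlgebra K G) (σ : G) : Submodule K g :=
  LinearMap.ker (LinearMap.rTensor g Φ.toLinearMap ∘ₗ η.toLinearMap
    - TensorProduct.mk K (MonoidAlgebra K G) g (MonoidAlgebra.of K G σ))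

/-- A `G`-grading of the Lie algebra `g`: an internal direct sum decomposition
`g = ⊕_σ g_σ` with `⁅g_σ, g_τ⁆ ⊆ g_{σ τ}`. -/
def IsLieGrading (K : Type u) [Field K] (G : Type u) [CommGroup G] [DecidableEq G]
    (g : Type u) [LieRing g] [LieAlgebra K g] (gr : G → Submodule K g) : Prop :=
  DirectSum.IsInternal gr ∧
    ∀ σ τ : G, ∀ x ∈ gr σ, ∀ y ∈ gr τ, ⁅x, y⁆ ∈ gr (σ * τ)


open scoped DirectSum
set_option linter.unusedSectionVars false
set_option maxHeartbeats 1000000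

section Helpers

variable {K : Type u} [Field K] {G : Type u} [CommGroup G] [DecidableEq G]
  {g : Type u} [LieRing g] [LieAlgebra K g]

/-- Projection onto the `σ`-coefficient. -/
noncomputable def Pmap (K : Type u) [Field K] {G : Type u} (g : Type u)
    [AddCommGroup g] [Module K g] (σ : G) : (MonoidAlgebra K G ⊗[K] g) →ₗ[K] g :=
  (TensorProduct.lid K g).toLinearMap ∘ₗ LinearMap.rTensor g (Finsupp.lapply σ ∘ₗ (MonoidAlgebra.coeffLinearEquiv K).toLinearMap)

theorem Pmap_tmul (σ : G) (a : MonoidAlgebra K G) (w : g) :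
    Pmap K g σ (a ⊗ₜ[K] w) = a.coeff σ • w := by
  simp only [Pmap, LinearMap.coe_comp, LinearEquiv.coe_coe, Function.comp_apply,
    LinearMap.rTensor_tmul, lid_tmul]
  erw [Finsupp.lapply_apply]

theorem Pmap_of (σ τ : G) (w : g) :
    Pmap K g τ (MonoidAlgebra.of K G σ ⊗ₜ[K] w) = if σ = τ then w else 0 := by
  rw [Pmap_tmul]
  rw [MonoidAlgebra.of_apply, MonoidAlgebra.coeff_single, Finsupp.single_apply]
  split <;> simp

/-- `rTensor` of an algebra map, as a morphism of Lie algebras. -/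
noncomputable def rTensorLie {B C : Type u} [CommRing B] [Algebra K B] [CommRing C] [Algebra K C]
    (Φ : B →ₐ[K] C) : (B ⊗[K] g) →ₗ⁅K⁆ (C ⊗[K] g) :=
  { LinearMap.rTensor g Φ.toLinearMap with
    map_lie' := by
      intro z w
      simp only [LinearMap.toFun_eq_coe]
      induction z using TensorProduct.induction_on with
      | zero => simp
      | add a b ha hb => simp_all [add_lie]
      | tmul a x =>
        induction w using TensorProduct.induction_on with
        | zero => simp
        | add c d hc hd => simp_all [lie_add]
        | tmul b y =>
          simp only [LieAlgebra.ExtendScalars.bracket_tmul, LinearMap.rTensor_tmul,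
            AlgHom.toLinearMap_apply, map_mul] }

@[simp] theorem rTensorLie_apply {B C : Type u} [CommRing B] [Algebra K B]
    [CommRing C] [Algebra K C] (Φ : B →ₐ[K] C) (z : B ⊗[K] g) :
    rTensorLie Φ z = LinearMap.rTensor g Φ.toLinearMap z := rfl

/-- Naturality of the associator. -/
theorem assoc_natural {B C : Type u} [CommRing B] [Algebra K B] [CommRing C] [Algebra K C]
    (Φ : B →ₐ[K] C) (t : B ⊗[K] (B ⊗[K] g)) :
    LinearMap.rTensor g (TensorProduct.map Φ.toLinearMap Φ.toLinearMap)
        ((TensorProduct.assoc K B B g).symm t)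
      = (TensorProduct.assoc K C C g).symm
          (TensorProduct.map Φ.toLinearMap (LinearMap.rTensor g Φ.toLinearMap) t) := by
  induction t using TensorProduct.induction_on with
  | zero => simp
  | add a b ha hb => simp_all
  | tmul b z =>
    induction z using TensorProduct.induction_on with
    | zero => simp
    | add a c ha hc =>
      simp only [tmul_add, map_add] at *
      rw [ha, hc]
    | tmul b' y => simp

theorem map_lTensor_eq {B C : Type u} [CommRing B] [Algebra K B] [CommRing C] [Algebra K C]
    (Φ : B →ₐ[K] C) (η : g →ₗ[K] B ⊗[K] g) (F : g →ₗ[K] C ⊗[K] g)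
    (hF : ∀ x, F x = LinearMap.rTensor g Φ.toLinearMap (η x)) (z : B ⊗[K] g) :
    TensorProduct.map Φ.toLinearMap (LinearMap.rTensor g Φ.toLinearMap)
        (LinearMap.lTensor B η z)
      = LinearMap.lTensor C F (LinearMap.rTensor g Φ.toLinearMap z) := by
  induction z using TensorProduct.induction_on with
  | zero => simp
  | add a b ha hb => simp_all
  | tmul b y => simp [hF]

end Helpers

section GradeMap

variable {K : Type u} [Field K] {G : Type u} [CommGroup G] [DecidableEq G]
  {g : Type u} [LieRing g] [LieAlgebra K g]
  (gr : G → Submodule K g) (hgr : DirectSum.IsInternal gr)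

noncomputable def dEquiv : g ≃ₗ[K] (⨁ σ : G, gr σ) :=
  (LinearEquiv.ofBijective (DirectSum.coeLinearMap gr) hgr).symm

theorem dEquiv_symm_apply (v : ⨁ σ : G, gr σ) :
    (dEquiv gr hgr).symm v = DirectSum.coeLinearMap gr v := rfl

theorem dEquiv_of (σ : G) (w : gr σ) :
    dEquiv gr hgr (w : g) = DirectSum.of (fun σ => gr σ) σ w := by
  apply (dEquiv gr hgr).symm.injective
  simp [dEquiv_symm_apply, DirectSum.coeLinearMap_of]

include hgr in
theorem mem_iSup_gr (x : g) : x ∈ ⨆ σ, gr σ := by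
  rw [hgr.submodule_iSup_eq_top]; trivial

variable {C : Type u} [CommRing C] [Algebra K C] (u : G →* C)

noncomputable def gradeMapL : g →ₗ[K] C ⊗[K] g :=
  (DFinsupp.lsum ℕ fun σ => TensorProduct.mk K C g (u σ) ∘ₗ (gr σ).subtype)
    ∘ₗ (dEquiv gr hgr).toLinearMap

theorem gradeMapL_mem {σ : G} {z : g} (hz : z ∈ gr σ) :
    gradeMapL gr hgr u z = u σ ⊗ₜ[K] z := by
  rw [gradeMapL, LinearMap.comp_apply]
  erw [dEquiv_of gr hgr σ ⟨z, hz⟩]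
  rw [show DirectSum.of (fun σ => gr σ) σ ⟨z, hz⟩ = DFinsupp.single σ ⟨z, hz⟩ from rfl,
    DFinsupp.lsum_single]
  rfl

/-- `gradeMapL` is a morphism of Lie algebras. -/
noncomputable def gradeMapLie (hbr : ∀ σ τ : G, ∀ x ∈ gr σ, ∀ y ∈ gr τ, ⁅x, y⁆ ∈ gr (σ * τ)) :
    g →ₗ⁅K⁆ C ⊗[K] g :=
  { gradeMapL gr hgr u with
    map_lie' := by
      intro x y
      simp only [LinearMap.toFun_eq_coe]
      refine Submodule.iSup_induction (x := x) gr
        (motive := fun x => ∀ y : g, gradeMapL gr hgr u ⁅x, y⁆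
          = ⁅gradeMapL gr hgr u x, gradeMapL gr hgr u y⁆)
        (mem_iSup_gr gr hgr x) (fun σ x hx => ?_) (fun y => by simp)
        (fun x₁ x₂ h1 h2 y => by rw [add_lie, map_add, h1, h2, map_add, add_lie]) y
      intro y
      refine Submodule.iSup_induction (x := y) gr
        (motive := fun y => gradeMapL gr hgr u ⁅x, y⁆
          = ⁅gradeMapL gr hgr u x, gradeMapL gr hgr u y⁆)
        (mem_iSup_gr gr hgr y) (fun τ y hy => ?_) (by simp)
        (fun y₁ y₂ h1 h2 => by rw [lie_add, map_add, h1, h2, map_add, lie_add])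
      rw [gradeMapL_mem gr hgr u hx, gradeMapL_mem gr hgr u hy,
        gradeMapL_mem gr hgr u (hbr σ τ x hx y hy),
        LieAlgebra.ExtendScalars.bracket_tmul, map_mul] }

theorem gradeMapLie_apply (hbr) (x : g) :
    gradeMapLie gr hgr u hbr x = gradeMapL gr hgr u x := rfl

/-- Transport of `gradeMapL` along an algebra map. -/
theorem gradeMapL_transport {C' : Type u} [CommRing C'] [Algebra K C']
    (ψ : C →ₐ[K] C') (u' : G →* C') (hu : ∀ σ, ψ (u σ) = u' σ) (x : g) :
    LinearMap.rTensor g ψ.toLinearMap (gradeMapL gr hgr u x) = gradeMapL gr hgr u' x := by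
  refine Submodule.iSup_induction (x := x) gr
    (motive := fun x => LinearMap.rTensor g ψ.toLinearMap (gradeMapL gr hgr u x)
      = gradeMapL gr hgr u' x)
    (mem_iSup_gr gr hgr x) (fun σ z hz => ?_) (by simp)
    (fun a b ha hb => by rw [map_add, map_add, ha, hb, map_add])
  rw [gradeMapL_mem gr hgr u hz, gradeMapL_mem gr hgr u' hz, LinearMap.rTensor_tmul,
    AlgHom.toLinearMap_apply, hu]

theorem gradeMapL_one (x : g) :
    gradeMapL gr hgr (1 : G →* K) x = (TensorProduct.lid K g).symm x := by
  refine Submodule.iSup_induction (x := x) gr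
    (motive := fun x => gradeMapL gr hgr (1 : G →* K) x = (TensorProduct.lid K g).symm x)
    (mem_iSup_gr gr hgr x) (fun σ z hz => ?_) (by simp)
    (fun a b ha hb => by rw [map_add, ha, hb, map_add])
  rw [gradeMapL_mem gr hgr _ hz]
  simp [TensorProduct.lid_symm_apply]

end GradeMap

section GradeMapMore

variable {K : Type u} [Field K] {G : Type u} [CommGroup G] [DecidableEq G]
  {g : Type u} [LieRing g] [LieAlgebra K g]
  (gr : G → Submodule K g) (hgr : DirectSum.IsInternal gr)

theorem gradeMapL_comul {C : Type u} [CommRing C] [Algebra K C]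
    (u : G →* C) (u2 : G →* C ⊗[K] C) (hu2 : ∀ σ, u2 σ = u σ ⊗ₜ[K] u σ) (x : g) :
    (TensorProduct.assoc K C C g).symm
        (LinearMap.lTensor C (gradeMapL gr hgr u) (gradeMapL gr hgr u x))
      = gradeMapL gr hgr u2 x := by
  refine Submodule.iSup_induction (x := x) gr
    (motive := fun x => (TensorProduct.assoc K C C g).symm
        (LinearMap.lTensor C (gradeMapL gr hgr u) (gradeMapL gr hgr u x))
      = gradeMapL gr hgr u2 x)
    (mem_iSup_gr gr hgr x) (fun σ z hz => ?_) (by simp)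
    (fun a b ha hb => by rw [map_add, map_add, map_add, ha, hb, map_add])
  rw [gradeMapL_mem gr hgr u hz, LinearMap.lTensor_tmul, gradeMapL_mem gr hgr u hz,
    assoc_symm_tmul, gradeMapL_mem gr hgr u2 hz, hu2]

theorem Pmap_gradeMapL (τ : G) (x : g) :
    Pmap K g τ (gradeMapL gr hgr (MonoidAlgebra.of K G) x)
      = ↑(dEquiv gr hgr x τ) := by
  refine Submodule.iSup_induction (x := x) gr
    (motive := fun x => Pmap K g τ (gradeMapL gr hgr (MonoidAlgebra.of K G) x)
      = ↑(dEquiv gr hgr x τ))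
    (mem_iSup_gr gr hgr x) (fun σ z hz => ?_) (by simp)
    (fun a b ha hb => by
      dsimp only at *
      rw [map_add, map_add, ha, hb, map_add, DFinsupp.add_apply, Submodule.coe_add])
  dsimp only
  rw [gradeMapL_mem gr hgr _ hz, Pmap_of]
  erw [dEquiv_of gr hgr σ ⟨z, hz⟩]
  by_cases h : σ = τ
  · subst h; rw [DirectSum.of_eq_same]; simp
  · rw [DirectSum.of_eq_of_ne _ _ _ (Ne.symm h)]; simp [h]

theorem mem_of_gradeMapL_eq {σ : G} {z : g}
    (h : gradeMapL gr hgr (MonoidAlgebra.of K G) z = MonoidAlgebra.of K G σ ⊗ₜ[K] z) :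
    z ∈ gr σ := by
  have hcomp : ∀ τ : G, (↑(dEquiv gr hgr z τ) : g) = if σ = τ then z else 0 := by
    intro τ
    rw [← Pmap_gradeMapL gr hgr τ z, h, Pmap_of]
  have hd : dEquiv gr hgr z = DirectSum.of (fun σ => gr σ) σ (dEquiv gr hgr z σ) := by
    refine DFinsupp.ext fun τ => ?_
    by_cases hτ : σ = τ
    · subst hτ; rw [DirectSum.of_eq_same]
    · rw [DirectSum.of_eq_of_ne _ _ _ (Ne.symm hτ)]
      have h2 := hcomp τ
      rw [if_neg hτ] at h2
      exact Subtype.coe_injective (by simpa using h2)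
  have : z = ↑(dEquiv gr hgr z σ) := by
    conv_lhs => rw [← (dEquiv gr hgr).symm_apply_apply z]
    rw [dEquiv_symm_apply, hd]
    -- dEquiv's symm of `of`... but we rewrote hd inside already? recompute
    rw [DirectSum.coeLinearMap_of, DirectSum.of_eq_same]
  rw [this]
  exact SetLike.coe_mem _
end GradeMapMore

section PartOne

variable {K : Type u} [Field K] {G : Type u} [CommGroup G] [DecidableEq G]
  {g : Type u} [LieRing g] [LieAlgebra K g]
  {B : Type u} [CommRing B] [Bialgebra K B]
  (η : g →ₗ⁅K⁆ B ⊗[K] g) (Φ : BialgHomToGroupAlgebra K G B)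

/-- The Lie algebra morphism `(Φ ⊗ id) ∘ η` (underlying linear map). -/
noncomputable def fmap : g →ₗ[K] MonoidAlgebra K G ⊗[K] g :=
  LinearMap.rTensor g Φ.toAlgHom.toLinearMap ∘ₗ η.toLinearMap

theorem fmap_lie (x y : g) : fmap η Φ ⁅x, y⁆ = ⁅fmap η Φ x, fmap η Φ y⁆ :=
  ((rTensorLie Φ.toAlgHom).comp η).map_lie x y

theorem mem_lieGrade {σ : G} {x : g} :
    x ∈ lieGrade η Φ.toAlgHom σ ↔ fmap η Φ x = MonoidAlgebra.of K G σ ⊗ₜ[K] x := by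
  rw [lieGrade, LinearMap.mem_ker, LinearMap.sub_apply, sub_eq_zero, TensorProduct.mk_apply]
  rfl

variable (hcoact : IsLieCoaction K g B η)

include hcoact in
theorem counit_fmap (x : g) :
    TensorProduct.lid K g (LinearMap.rTensor g (groupCounit K G) (fmap η Φ x)) = x := by
  have h1 : groupCounit K G ∘ₗ Φ.toAlgHom.toLinearMap
      = Coalgebra.counit (R := K) (A := B) := LinearMap.ext Φ.counit_comp
  rw [fmap, LinearMap.comp_apply, ← LinearMap.rTensor_comp_apply, h1]
  exact hcoact.1 x

include hcoact in
theorem comul_fmap (x : g) :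
    LinearMap.rTensor g (groupComul K G) (fmap η Φ x)
      = (TensorProduct.assoc K (MonoidAlgebra K G) (MonoidAlgebra K G) g).symm
          (LinearMap.lTensor (MonoidAlgebra K G) (fmap η Φ) (fmap η Φ x)) := by
  have h1 : groupComul K G ∘ₗ Φ.toAlgHom.toLinearMap
      = TensorProduct.map Φ.toAlgHom.toLinearMap Φ.toAlgHom.toLinearMap
          ∘ₗ Coalgebra.comul (R := K) (A := B) := LinearMap.ext Φ.comul_comp
  have h2 : LinearMap.rTensor g (Coalgebra.comul (R := K) (A := B)) (η.toLinearMap x)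
      = (TensorProduct.assoc K B B g).symm
          (LinearMap.lTensor B η.toLinearMap (η.toLinearMap x)) := hcoact.2 x
  rw [show fmap η Φ x = LinearMap.rTensor g Φ.toAlgHom.toLinearMap (η.toLinearMap x) from rfl,
    ← LinearMap.rTensor_comp_apply, h1, LinearMap.rTensor_comp_apply, h2,
    assoc_natural Φ.toAlgHom,
    map_lTensor_eq Φ.toAlgHom η.toLinearMap (fmap η Φ) (fun _ => rfl)]

/-- Contraction of the first tensor factor at `σ`. -/
noncomputable def Emap (σ : G) :
    MonoidAlgebra K G ⊗[K] (MonoidAlgebra K G ⊗[K] g) →ₗ[K] MonoidAlgebra K G ⊗[K] g :=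
  (TensorProduct.lid K (MonoidAlgebra K G ⊗[K] g)).toLinearMap
    ∘ₗ LinearMap.rTensor (MonoidAlgebra K G ⊗[K] g) (Finsupp.lapply σ ∘ₗ (MonoidAlgebra.coeffLinearEquiv K).toLinearMap)

theorem Emap_tmul (σ : G) (a : MonoidAlgebra K G) (z : MonoidAlgebra K G ⊗[K] g) :
    Emap σ (a ⊗ₜ[K] z) = a.coeff σ • z := by
  simp only [Emap, LinearMap.coe_comp, LinearEquiv.coe_coe, Function.comp_apply,
    LinearMap.rTensor_tmul, lid_tmul]
  erw [Finsupp.lapply_apply]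

theorem groupComul_single (τ : G) (k : K) :
    groupComul K G (MonoidAlgebra.single τ k)
      = k • (MonoidAlgebra.of K G τ ⊗ₜ[K] MonoidAlgebra.of K G τ) := by
  rw [groupComul]
  erw [MonoidAlgebra.lift_single]
  rfl

theorem groupCounit_single (τ : G) (k : K) :
    groupCounit K G (MonoidAlgebra.single τ k) = k := by
  rw [groupCounit]
  erw [MonoidAlgebra.lift_single]
  simp

theorem Emap_assoc_comul (σ : G) (w : MonoidAlgebra K G ⊗[K] g) :
    Emap σ (TensorProduct.assoc K (MonoidAlgebra K G) (MonoidAlgebra K G) g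
        (LinearMap.rTensor g (groupComul K G) w))
      = MonoidAlgebra.of K G σ ⊗ₜ[K] Pmap K g σ w := by
  induction w using TensorProduct.induction_on with
  | zero => simp
  | add a b ha hb => rw [map_add, map_add, map_add, ha, hb, map_add, tmul_add]
  | tmul a y =>
    have core : ∀ τ : G, Emap σ (TensorProduct.assoc K (MonoidAlgebra K G) (MonoidAlgebra K G) g
        (LinearMap.rTensor g (groupComul K G) (MonoidAlgebra.of K G τ ⊗ₜ[K] y)))
        = MonoidAlgebra.of K G σ ⊗ₜ[K] Pmap K g σ (MonoidAlgebra.of K G τ ⊗ₜ[K] y) := by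
      intro τ
      have hΔ : groupComul K G (MonoidAlgebra.of K G τ)
          = MonoidAlgebra.of K G τ ⊗ₜ[K] MonoidAlgebra.of K G τ := by
        rw [groupComul]
        erw [MonoidAlgebra.lift_of]
        rfl
      rw [LinearMap.rTensor_tmul, hΔ, assoc_tmul, Emap_tmul, Pmap_of]
      rw [MonoidAlgebra.of_apply, MonoidAlgebra.coeff_single, Finsupp.single_apply]
      by_cases h : τ = σ
      · subst h; simp
      · simp [h]
    induction a using MonoidAlgebra.induction_linear with
    | zero => erw [zero_tmul]; simp
    | add p q hp hq =>
      erw [add_tmul]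
      rw [map_add, map_add, map_add, hp, hq, map_add, tmul_add]
    | single τ k =>
      have h1 : MonoidAlgebra.single τ k ⊗ₜ[K] y
          = k • (MonoidAlgebra.of K G τ ⊗ₜ[K] y) := by
        rw [smul_tmul']
        congr 1
        rw [MonoidAlgebra.of_apply, MonoidAlgebra.smul_single', mul_one]
      rw [h1, map_smul, map_smul, map_smul, map_smul, core, tmul_smul]

theorem Emap_lTensor_fmap (σ : G) (w : MonoidAlgebra K G ⊗[K] g) :
    Emap σ (LinearMap.lTensor (MonoidAlgebra K G) (fmap η Φ) w)
      = fmap η Φ (Pmap K g σ w) := by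
  induction w using TensorProduct.induction_on with
  | zero => simp
  | add a b ha hb => rw [map_add, map_add, ha, hb, map_add, map_add]
  | tmul a y => rw [LinearMap.lTensor_tmul, Emap_tmul, Pmap_tmul, map_smul]

include hcoact in
theorem Pmap_fmap_mem (σ : G) (x : g) :
    Pmap K g σ (fmap η Φ x) ∈ lieGrade η Φ.toAlgHom σ := by
  rw [mem_lieGrade]
  calc fmap η Φ (Pmap K g σ (fmap η Φ x))
      = Emap σ (LinearMap.lTensor (MonoidAlgebra K G) (fmap η Φ) (fmap η Φ x)) :=
        (Emap_lTensor_fmap η Φ σ _).symm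
    _ = Emap σ (TensorProduct.assoc K (MonoidAlgebra K G) (MonoidAlgebra K G) g
          ((TensorProduct.assoc K (MonoidAlgebra K G) (MonoidAlgebra K G) g).symm
            (LinearMap.lTensor (MonoidAlgebra K G) (fmap η Φ) (fmap η Φ x)))) := by
        rw [LinearEquiv.apply_symm_apply]
    _ = Emap σ (TensorProduct.assoc K (MonoidAlgebra K G) (MonoidAlgebra K G) g
          (LinearMap.rTensor g (groupComul K G) (fmap η Φ x))) := by
        rw [← comul_fmap η Φ hcoact]
    _ = MonoidAlgebra.of K G σ ⊗ₜ[K] Pmap K g σ (fmap η Φ x) := Emap_assoc_comul σ _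

theorem Pmap_eq_fsl (σ : G) (z : MonoidAlgebra K G ⊗[K] g) :
    Pmap K g σ z = TensorProduct.finsuppScalarLeft K g G
      (LinearMap.rTensor g (MonoidAlgebra.coeffLinearEquiv K).toLinearMap z) σ := by
  rw [TensorProduct.finsuppScalarLeft_apply, ← LinearMap.rTensor_comp_apply]; rfl

theorem sum_fsl (z : MonoidAlgebra K G ⊗[K] g) :
    ((TensorProduct.finsuppScalarLeft K g G
        (LinearMap.rTensor g (MonoidAlgebra.coeffLinearEquiv K).toLinearMap z)).sum fun _ v => v)
      = TensorProduct.lid K g (LinearMap.rTensor g (groupCounit K G) z) := by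
  induction z using TensorProduct.induction_on with
  | zero => simp
  | add a b ha hb =>
    rw [map_add, map_add, Finsupp.sum_add_index' (fun _ => rfl) (fun _ _ _ => rfl), ha, hb,
      map_add, map_add]
  | tmul a y =>
    induction a using MonoidAlgebra.induction_linear with
    | zero => erw [zero_tmul]; simp
    | add p q hp hq =>
      erw [add_tmul]
      rw [map_add, map_add, map_add, Finsupp.sum_add_index' (fun _ => rfl) (fun _ _ _ => rfl), hp, hq,
        map_add]
    | single τ k =>
      rw [LinearMap.rTensor_tmul]
      erw [TensorProduct.finsuppScalarLeft_apply_tmul]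
      rw [LinearMap.rTensor_tmul, groupCounit_single, lid_tmul,
        LinearEquiv.coe_coe, MonoidAlgebra.coeffLinearEquiv_apply, MonoidAlgebra.coeff_single,
        Finsupp.sum_single_index (by simp [Finsupp.sum_single_index]), Finsupp.sum_single_index rfl]

include hcoact in
theorem lieGrade_iSup_eq_top : (⨆ σ, lieGrade η Φ.toAlgHom σ) = ⊤ := by
  rw [eq_top_iff]
  intro x _
  have hx : x = ((TensorProduct.finsuppScalarLeft K g G
        (LinearMap.rTensor g (MonoidAlgebra.coeffLinearEquiv K).toLinearMap (fmap η Φ x))).sum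
        fun _ v => v) := by
    rw [sum_fsl, counit_fmap η Φ hcoact]
  rw [hx]
  refine Submodule.sum_mem _ fun σ _ => Submodule.mem_iSup_of_mem σ ?_
  rw [← Pmap_eq_fsl]
  exact Pmap_fmap_mem η Φ hcoact σ x

include hcoact in
theorem lieGrade_key (v : Π₀ σ : G, lieGrade η Φ.toAlgHom σ) (τ : G) :
    Pmap K g τ (fmap η Φ
        ((DFinsupp.lsum ℕ fun σ => (lieGrade η Φ.toAlgHom σ).subtype) v))
      = ↑(v τ) := by
  induction v using DFinsupp.induction with
  | h0 => simp
  | ha σ b f hf hb ih =>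
    rw [map_add, DFinsupp.lsum_single, map_add, map_add,
      show ((lieGrade η Φ.toAlgHom σ).subtype b : g) = ↑b from rfl,
      (mem_lieGrade η Φ).1 b.2, Pmap_of, ih]
    by_cases h : σ = τ
    · subst h; simp [DFinsupp.single_eq_same]
    · simp [DFinsupp.single_eq_of_ne (Ne.symm h), h]

include hcoact in
theorem lieGrade_indep : iSupIndep (lieGrade η Φ.toAlgHom) := by
  rw [iSupIndep_iff_dfinsupp_lsum_injective]
  intro v w hvw
  ext τ
  rw [← lieGrade_key η Φ hcoact v τ, ← lieGrade_key η Φ hcoact w τ, hvw]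

theorem lieGrade_bracket {σ τ : G} {x y : g}
    (hx : x ∈ lieGrade η Φ.toAlgHom σ) (hy : y ∈ lieGrade η Φ.toAlgHom τ) :
    ⁅x, y⁆ ∈ lieGrade η Φ.toAlgHom (σ * τ) := by
  rw [mem_lieGrade] at hx hy ⊢
  rw [fmap_lie, hx, hy, LieAlgebra.ExtendScalars.bracket_tmul, ← map_mul]

end PartOne

theorem lieGrade_bijective_onto_gradings
    (K : Type u) [Field K] [CharZero K]
    (G : Type u) [CommGroup G] [DecidableEq G]
    (g : Type u) [LieRing g] [LieAlgebra K g] [FiniteDimensional K g]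
    (B : Type u) [CommRing B] [Bialgebra K B]
    (η : g →ₗ⁅K⁆ B ⊗[K] g)
    (hcoact : IsLieCoaction K g B η)
    (huniv : IsUniversalLiePair K g g B η) :
    -- each `Φ` gives a `G`-grading of the Lie algebra `g`
    (∀ Φ : BialgHomToGroupAlgebra K G B, IsLieGrading K G g (lieGrade η Φ.toAlgHom)) ∧
    -- the assignment is injective
    (∀ Φ Φ' : BialgHomToGroupAlgebra K G B,
      (∀ σ : G, lieGrade η Φ.toAlgHom σ = lieGrade η Φ'.toAlgHom σ) → Φ = Φ') ∧
    -- the assignment is surjective onto the `G`-gradings of `g`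
    (∀ gr : G → Submodule K g, IsLieGrading K G g gr →
      ∃ Φ : BialgHomToGroupAlgebra K G B, ∀ σ : G, lieGrade η Φ.toAlgHom σ = gr σ) := by
  have part1 : ∀ Φ : BialgHomToGroupAlgebra K G B,
      IsLieGrading K G g (lieGrade η Φ.toAlgHom) := by
    intro Φ
    refine ⟨DirectSum.isInternal_submodule_of_iSupIndep_of_iSup_eq_top
      (lieGrade_indep η Φ hcoact) (lieGrade_iSup_eq_top η Φ hcoact), ?_⟩
    intro σ τ x hx y hy
    exact lieGrade_bracket η Φ hx hy
  refine ⟨part1, ?_, ?_⟩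
  · -- injectivity
    intro Φ Φ' hgr
    have hff : ∀ x : g, fmap η Φ x = fmap η Φ' x := by
      intro x
      have hx : x ∈ ⨆ σ, lieGrade η Φ.toAlgHom σ := by
        rw [lieGrade_iSup_eq_top η Φ hcoact]; trivial
      refine Submodule.iSup_induction (x := x) (lieGrade η Φ.toAlgHom)
        (motive := fun x => fmap η Φ x = fmap η Φ' x) hx (fun σ z hz => ?_) (by simp)
        (fun a b ha hb => by rw [map_add, map_add, ha, hb])
      rw [(mem_lieGrade η Φ).1 hz, (mem_lieGrade η Φ').1 (by rw [← hgr σ]; exact hz)]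
    obtain ⟨Ψ, -, hu⟩ := huniv (MonoidAlgebra K G) ((rTensorLie Φ.toAlgHom).comp η)
    have h1 : Φ.toAlgHom = Ψ := hu Φ.toAlgHom (fun x => rfl)
    have h2 : Φ'.toAlgHom = Ψ := hu Φ'.toAlgHom (fun x => hff x)
    have h3 : Φ.toAlgHom = Φ'.toAlgHom := h1.trans h2.symm
    cases Φ; cases Φ'
    simp only at h3
    subst h3
    rfl
  · -- surjectivity
    intro gr hgrad
    obtain ⟨hint, hbr⟩ := hgrad
    obtain ⟨Φ₀, hΦ₀, hu⟩ :=
      huniv (MonoidAlgebra K G) (gradeMapLie gr hint (MonoidAlgebra.of K G) hbr)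
    -- hΦ₀ : ∀ x, gradeMapLie ... x = rTensor Φ₀ (η x)
    have hΦ₀' : ∀ x : g, gradeMapL gr hint (MonoidAlgebra.of K G) x
        = LinearMap.rTensor g Φ₀.toLinearMap (η.toLinearMap x) := hΦ₀
    -- counit compatibility
    have hcounit : ∀ b : B, groupCounit K G (Φ₀ b)
        = Coalgebra.counit (R := K) (A := B) b := by
      obtain ⟨Ψ, -, huK⟩ := huniv K (gradeMapLie gr hint (1 : G →* K) hbr)
      have e1 : (MonoidAlgebra.lift K K G (1 : G →* K)).comp Φ₀ = Ψ := by
        refine huK _ fun x => ?_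
        have hcomp : LinearMap.rTensor g ((MonoidAlgebra.lift K K G (1 : G →* K)).comp
              Φ₀).toLinearMap (η x)
            = LinearMap.rTensor g (MonoidAlgebra.lift K K G (1 : G →* K)).toLinearMap
                (LinearMap.rTensor g Φ₀.toLinearMap (η x)) := by
          rw [← LinearMap.rTensor_comp_apply]; rfl
        rw [gradeMapLie_apply, hcomp, ← hΦ₀ x, gradeMapLie_apply,
          gradeMapL_transport gr hint (MonoidAlgebra.of K G)
            (MonoidAlgebra.lift K K G (1 : G →* K)) (1 : G →* K)
            (fun σ => by rw [MonoidAlgebra.lift_of]) x]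
      have e2 : Bialgebra.counitAlgHom K B = Ψ := by
        refine huK _ fun x => ?_
        rw [gradeMapLie_apply, gradeMapL_one]
        rw [LinearEquiv.symm_apply_eq]
        exact (hcoact.1 x).symm
      have e3 := e1.trans e2.symm
      intro b
      exact congrArg (fun (ψ : B →ₐ[K] K) => ψ b) e3
    -- comul compatibility
    have hcomul : ∀ b : B, groupComul K G (Φ₀ b)
        = TensorProduct.map Φ₀.toLinearMap Φ₀.toLinearMap
            (Coalgebra.comul (R := K) (A := B) b) := by
      obtain ⟨Ψ, -, huC⟩ :=
        huniv (MonoidAlgebra K G ⊗[K] MonoidAlgebra K G)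
          (gradeMapLie gr hint (diagMonoidHom K G) hbr)
      have e1 : (MonoidAlgebra.lift K (MonoidAlgebra K G ⊗[K] MonoidAlgebra K G) G
          (diagMonoidHom K G)).comp Φ₀ = Ψ := by
        refine huC _ fun x => ?_
        have hcomp : LinearMap.rTensor g ((MonoidAlgebra.lift K _ G
              (diagMonoidHom K G)).comp Φ₀).toLinearMap (η x)
            = LinearMap.rTensor g (MonoidAlgebra.lift K _ G
                (diagMonoidHom K G)).toLinearMap
                (LinearMap.rTensor g Φ₀.toLinearMap (η x)) := by
          rw [← LinearMap.rTensor_comp_apply]; rfl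
        rw [gradeMapLie_apply, hcomp, ← hΦ₀ x, gradeMapLie_apply,
          gradeMapL_transport gr hint (MonoidAlgebra.of K G)
            (MonoidAlgebra.lift K _ G (diagMonoidHom K G)) (diagMonoidHom K G)
            (fun σ => by rw [MonoidAlgebra.lift_of]) x]
      have e2 : (Algebra.TensorProduct.map Φ₀ Φ₀).comp (Bialgebra.comulAlgHom K B) = Ψ := by
        refine huC _ fun x => ?_
        rw [gradeMapLie_apply]
        have hmapeq : ∀ z : B ⊗[K] B, Algebra.TensorProduct.map Φ₀ Φ₀ z
            = TensorProduct.map Φ₀.toLinearMap Φ₀.toLinearMap z := by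
          intro z
          induction z using TensorProduct.induction_on with
          | zero => simp
          | add a b ha hb => rw [map_add, map_add, ha, hb]
          | tmul a b => simp
        have hstep : LinearMap.rTensor g ((Algebra.TensorProduct.map Φ₀ Φ₀).comp
              (Bialgebra.comulAlgHom K B)).toLinearMap (η x)
            = LinearMap.rTensor g (TensorProduct.map Φ₀.toLinearMap Φ₀.toLinearMap)
                (LinearMap.rTensor g (Coalgebra.comul (R := K) (A := B))
                  (η.toLinearMap x)) := by
          rw [← LinearMap.rTensor_comp_apply]
          have hc : ((Algebra.TensorProduct.map Φ₀ Φ₀).comp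
                (Bialgebra.comulAlgHom K B)).toLinearMap
              = TensorProduct.map Φ₀.toLinearMap Φ₀.toLinearMap
                  ∘ₗ Coalgebra.comul (R := K) (A := B) :=
            LinearMap.ext fun b => hmapeq (Bialgebra.comulAlgHom K B b)
          rw [hc]
          rfl
        have h2 : LinearMap.rTensor g (Coalgebra.comul (R := K) (A := B)) (η.toLinearMap x)
            = (TensorProduct.assoc K B B g).symm
                (LinearMap.lTensor B η.toLinearMap (η.toLinearMap x)) := hcoact.2 x
        rw [hstep, h2, assoc_natural Φ₀,
          map_lTensor_eq Φ₀ η.toLinearMap (gradeMapL gr hint (MonoidAlgebra.of K G))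
            (fun y => hΦ₀' y), ← hΦ₀' x,
          gradeMapL_comul gr hint (MonoidAlgebra.of K G) (diagMonoidHom K G)
            (fun σ => rfl) x]
      have e3 := e1.trans e2.symm
      intro b
      have e4 := congrArg (fun (ψ : B →ₐ[K] (MonoidAlgebra K G ⊗[K] MonoidAlgebra K G))
        => ψ b) e3
      simp only [AlgHom.comp_apply] at e4
      have hmapeq : Algebra.TensorProduct.map Φ₀ Φ₀ (Bialgebra.comulAlgHom K B b)
          = TensorProduct.map Φ₀.toLinearMap Φ₀.toLinearMap
              (Coalgebra.comul (R := K) (A := B) b) := by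
        have : (Bialgebra.comulAlgHom K B b) = Coalgebra.comul (R := K) (A := B) b := rfl
        rw [this]
        induction (Coalgebra.comul (R := K) (A := B) b) using TensorProduct.induction_on with
        | zero => simp
        | add a c ha hc => rw [map_add, map_add, ha, hc]
        | tmul a c => simp
      rw [← hmapeq, ← e4]
      rfl
    refine ⟨⟨Φ₀, hcounit, hcomul⟩, fun σ => ?_⟩
    ext z
    constructor
    · intro hz
      have hz' := (mem_lieGrade η ⟨Φ₀, hcounit, hcomul⟩).1 hz
      refine mem_of_gradeMapL_eq gr hint ?_
      rw [hΦ₀' z]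
      exact hz'
    · intro hz
      rw [mem_lieGrade]
      show LinearMap.rTensor g Φ₀.toLinearMap (η.toLinearMap z) = _
      rw [← hΦ₀' z]
      exact gradeMapL_mem gr hint _ hz
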